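/- For the SARAH recursive gradient sequence: let y^{j+1} = y^j - η v^j with v^j = ∇ℓ_{z_j}(y^j) - ∇ℓ_{z_j}(y^{j-1}) + v^{j-1} where z_j is drawn uniformly from M_k, v⁰ = ∇f(y⁰), and f_k is the average of ℓ_z over M_k. Then for every s ≥ 1, E[‖∇f(y⁰) - ∇f_k(y⁰) + ∇f_k(y^s) - v^s‖²] = Σ_{j=1}^s E[‖v^j - v^{j-1}‖²] - Σ_{j=1}^s E[‖∇f_k(y^j) - ∇f_k(y^{j-1})‖²]. -/

import Mathlib

open InnerProductSpace

private lemma sum_update_aux {S : Type*} [Fintype S] {m : ℕ}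
    (j : Fin m) (F : (Fin m → S) → ℝ) :
    ∑ ω : Fin m → S, ∑ z : S, F (Function.update ω j z)
      = (Fintype.card S : ℝ) * ∑ ω : Fin m → S, F ω := by
  have hT : Function.Involutive
      (fun p : (Fin m → S) × S => (Function.update p.1 j p.2, p.1 j)) := by
    intro p
    simp [Function.update_idem]
  calc ∑ ω : Fin m → S, ∑ z : S, F (Function.update ω j z)
      = ∑ p : (Fin m → S) × S, F (Function.update p.1 j p.2) :=
        (Fintype.sum_prod_type (f := fun p => F (Function.update p.1 j p.2))).symm
    _ = ∑ p : (Fin m → S) × S, F p.1 :=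
        hT.bijective.sum_comp (fun q : (Fin m → S) × S => F q.1)
    _ = (Fintype.card S : ℝ) * ∑ ω : Fin m → S, F ω := by
        rw [Fintype.sum_prod_type]
        simp [Finset.sum_const, mul_comm, Finset.mul_sum]

private lemma grad_sum_aux {d : ℕ} {ι : Type*} (M : Finset ι) (hM : M.Nonempty)
    (ℓ : ι → EuclideanSpace ℝ (Fin d) → ℝ)
    (hdiff : ∀ z ∈ M, Differentiable ℝ (ℓ z))
    (fk : EuclideanSpace ℝ (Fin d) → ℝ)
    (hfk : ∀ x, fk x = (∑ z ∈ M, ℓ z x) / M.card)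
    (x : EuclideanSpace ℝ (Fin d)) :
    ∑ z ∈ M, gradient (ℓ z) x = (M.card : ℝ) • gradient fk x := by
  have hcard : (M.card : ℝ) ≠ 0 := by
    exact_mod_cast (Finset.card_pos.mpr hM).ne'
  have hfd : fderiv ℝ fk x = (M.card : ℝ)⁻¹ • ∑ z ∈ M, fderiv ℝ (ℓ z) x := by
    have hfk' : fk = fun y => (M.card : ℝ)⁻¹ • ∑ z ∈ M, ℓ z y := by
      funext y; rw [hfk y, div_eq_inv_mul]; rfl
    rw [hfk']
    rw [fderiv_fun_const_smul (by
      apply DifferentiableAt.fun_sum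
      exact fun z hz => (hdiff z hz).differentiableAt)]
    congr 1
    rw [fderiv_fun_sum (fun z hz => (hdiff z hz).differentiableAt)]
  rw [gradient, hfd]
  rw [map_smul, map_sum]
  rw [smul_smul, mul_inv_cancel₀ hcard, one_smul]
  rfl

theorem statement10 {d : ℕ} {ι : Type*} (M : Finset ι) (hM : M.Nonempty)
    (ℓ : ι → EuclideanSpace ℝ (Fin d) → ℝ)
    (hdiff : ∀ z ∈ M, Differentiable ℝ (ℓ z))
    (f fk : EuclideanSpace ℝ (Fin d) → ℝ)
    (hfk : ∀ x, fk x = (∑ z ∈ M, ℓ z x) / M.card)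
    (hf : Differentiable ℝ f) (hfkd : Differentiable ℝ fk)
    (m : ℕ) (η : ℝ) (x0 : EuclideanSpace ℝ (Fin d))
    (y v : ℕ → (Fin m → {z // z ∈ M}) → EuclideanSpace ℝ (Fin d))
    (hy0 : ∀ ω, y 0 ω = x0)
    (hv0 : ∀ ω, v 0 ω = gradient f x0)
    (hyrec : ∀ j : Fin m, ∀ ω, y ((j : ℕ) + 1) ω = y (j : ℕ) ω - η • v (j : ℕ) ω)
    (hvrec : ∀ j : Fin m, ∀ ω,
      v ((j : ℕ) + 1) ω =
        gradient (ℓ (ω j)) (y ((j : ℕ) + 1) ω) - gradient (ℓ (ω j)) (y (j : ℕ) ω)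
          + v (j : ℕ) ω)
    (s : ℕ) (hs1 : 1 ≤ s) (hsm : s ≤ m) :
    (∑ ω : Fin m → {z // z ∈ M},
        ‖gradient f x0 - gradient fk x0 + gradient fk (y s ω) - v s ω‖ ^ 2)
        / (Fintype.card (Fin m → {z // z ∈ M})) =
      (∑ j ∈ Finset.Icc 1 s, (∑ ω : Fin m → {z // z ∈ M}, ‖v j ω - v (j - 1) ω‖ ^ 2)
          / (Fintype.card (Fin m → {z // z ∈ M})))
        - ∑ j ∈ Finset.Icc 1 s, (∑ ω : Fin m → {z // z ∈ M},
            ‖gradient fk (y j ω) - gradient fk (y (j - 1) ω)‖ ^ 2)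
          / (Fintype.card (Fin m → {z // z ∈ M})) := by
  -- dependence lemma
  have hdep : ∀ j : ℕ, j ≤ m → ∀ ω ω' : Fin m → {z // z ∈ M},
      (∀ i : Fin m, (i : ℕ) < j → ω i = ω' i) → y j ω = y j ω' ∧ v j ω = v j ω' := by
    intro j
    induction j with
    | zero =>
      intro _ ω ω' _
      exact ⟨by rw [hy0, hy0], by rw [hv0, hv0]⟩
    | succ t ih =>
      intro hjm ω ω' hagree
      have ht : t < m := hjm
      have hprev := ih ht.le ω ω' (fun i hi => hagree i (Nat.lt_succ_of_lt hi))
      have hyeq : y (t + 1) ω = y (t + 1) ω' := by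
        rw [hyrec ⟨t, ht⟩ ω, hyrec ⟨t, ht⟩ ω', hprev.1, hprev.2]
      refine ⟨hyeq, ?_⟩
      rw [hvrec ⟨t, ht⟩ ω, hvrec ⟨t, ht⟩ ω']
      have homega : ω ⟨t, ht⟩ = ω' ⟨t, ht⟩ := hagree ⟨t, ht⟩ (Nat.lt_succ_self t)
      rw [homega, hyeq, hprev.1, hprev.2]
  -- invariance under update at coordinate t
  have hinv : ∀ (t : ℕ) (ht : t < m) (j : ℕ), j ≤ t → ∀ (ω : Fin m → {z // z ∈ M}) (z : {z // z ∈ M}),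
      y j (Function.update ω ⟨t, ht⟩ z) = y j ω ∧
        v j (Function.update ω ⟨t, ht⟩ z) = v j ω := by
    intro t ht j hj ω z
    apply hdep j (hj.trans ht.le)
    intro i hi
    apply Function.update_of_ne
    have hne : (i : ℕ) ≠ t := by omega
    exact Fin.ne_of_val_ne hne
  have hyinv1 : ∀ (t : ℕ) (ht : t < m) (ω : Fin m → {z // z ∈ M}) (z : {z // z ∈ M}),
      y (t + 1) (Function.update ω ⟨t, ht⟩ z) = y (t + 1) ω := by
    intro t ht ω z
    rw [hyrec ⟨t, ht⟩, hyrec ⟨t, ht⟩, (hinv t ht t le_rfl ω z).1,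
      (hinv t ht t le_rfl ω z).2]
  -- key martingale step
  have key : ∀ (t : ℕ) (ht : t < m) (W : (Fin m → {z // z ∈ M}) → EuclideanSpace ℝ (Fin d)),
      (∀ (ω : Fin m → {z // z ∈ M}) (z : {z // z ∈ M}), W (Function.update ω ⟨t, ht⟩ z) = W ω) →
      ∑ ω : Fin m → {z // z ∈ M}, ⟪W ω, v (t + 1) ω - v t ω⟫_ℝ
        = ∑ ω : Fin m → {z // z ∈ M}, ⟪W ω, gradient fk (y (t + 1) ω) - gradient fk (y t ω)⟫_ℝ := by
    intro t ht W hW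
    have hcS : (Fintype.card {z // z ∈ M} : ℝ) ≠ 0 := by
      have : Fintype.card {z // z ∈ M} = M.card := Fintype.card_coe M
      rw [this]
      exact_mod_cast (Finset.card_pos.mpr hM).ne'
    have hpt : ∀ (ω : Fin m → {z // z ∈ M}) (z : {z // z ∈ M}),
        v (t + 1) (Function.update ω ⟨t, ht⟩ z) - v t (Function.update ω ⟨t, ht⟩ z)
          = gradient (ℓ z) (y (t + 1) ω) - gradient (ℓ z) (y t ω) := by
      intro ω z
      rw [hvrec ⟨t, ht⟩ (Function.update ω ⟨t, ht⟩ z)]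
      rw [Function.update_self]
      rw [hyinv1 t ht ω z, (hinv t ht t le_rfl ω z).1, (hinv t ht t le_rfl ω z).2]
      abel
    apply mul_left_cancel₀ hcS
    rw [← sum_update_aux (⟨t, ht⟩ : Fin m) (fun ω => ⟪W ω, v (t + 1) ω - v t ω⟫_ℝ)]
    calc ∑ ω : Fin m → {z // z ∈ M}, ∑ z : {z // z ∈ M},
          ⟪W (Function.update ω ⟨t, ht⟩ z),
            v (t + 1) (Function.update ω ⟨t, ht⟩ z)
              - v t (Function.update ω ⟨t, ht⟩ z)⟫_ℝ
        = ∑ ω : Fin m → {z // z ∈ M}, ∑ z : {z // z ∈ M},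
            ⟪W ω, gradient (ℓ z) (y (t + 1) ω) - gradient (ℓ z) (y t ω)⟫_ℝ := by
          refine Finset.sum_congr rfl fun ω _ => Finset.sum_congr rfl fun z _ => ?_
          rw [hW ω z, hpt ω z]
      _ = (Fintype.card {z // z ∈ M} : ℝ)
            * ∑ ω : Fin m → {z // z ∈ M}, ⟪W ω, gradient fk (y (t + 1) ω) - gradient fk (y t ω)⟫_ℝ := by
          rw [Finset.mul_sum]
          refine Finset.sum_congr rfl fun ω _ => ?_
          rw [← inner_sum]
          have hsum : ∑ z : {z // z ∈ M}, (gradient (ℓ z) (y (t + 1) ω) - gradient (ℓ z) (y t ω))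
              = (Fintype.card {z // z ∈ M} : ℝ) •
                  (gradient fk (y (t + 1) ω) - gradient fk (y t ω)) := by
            rw [Finset.sum_sub_distrib]
            have h1 : ∑ z : {z // z ∈ M}, gradient (ℓ (z : ι)) (y (t + 1) ω)
                = ∑ z ∈ M, gradient (ℓ z) (y (t + 1) ω) :=
                Finset.sum_coe_sort M (fun z => gradient (ℓ z) (y (t + 1) ω))
            have h2 : ∑ z : {z // z ∈ M}, gradient (ℓ (z : ι)) (y t ω)
                = ∑ z ∈ M, gradient (ℓ z) (y t ω) :=
                Finset.sum_coe_sort M (fun z => gradient (ℓ z) (y t ω))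
            rw [h1, h2, grad_sum_aux M hM ℓ hdiff fk hfk, grad_sum_aux M hM ℓ hdiff fk hfk]
            rw [Fintype.card_coe, smul_sub]
          rw [hsum, real_inner_smul_right]
  -- main identity (unnormalized), by induction
  have main : ∀ s : ℕ, s ≤ m →
      ∑ ω : Fin m → {z // z ∈ M}, ‖gradient f x0 - gradient fk x0 + gradient fk (y s ω) - v s ω‖ ^ 2
        = (∑ j ∈ Finset.Icc 1 s, ∑ ω : Fin m → {z // z ∈ M}, ‖v j ω - v (j - 1) ω‖ ^ 2)
          - ∑ j ∈ Finset.Icc 1 s,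
              ∑ ω : Fin m → {z // z ∈ M}, ‖gradient fk (y j ω) - gradient fk (y (j - 1) ω)‖ ^ 2 := by
    intro s
    induction s with
    | zero =>
      intro _
      have h0 : ∀ ω : Fin m → {z // z ∈ M},
          gradient f x0 - gradient fk x0 + gradient fk (y 0 ω) - v 0 ω = 0 := by
        intro ω; rw [hy0, hv0]; abel
      simp [h0, Finset.Icc_eq_empty_of_lt (show (0 : ℕ) < 1 by omega)]
    | succ t ih =>
      intro hsm
      have ht : t < m := hsm
      have iht := ih ht.le
      set A : (Fin m → {z // z ∈ M}) → EuclideanSpace ℝ (Fin d) := fun ω => v (t + 1) ω - v t ω with hA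
      set B : (Fin m → {z // z ∈ M}) → EuclideanSpace ℝ (Fin d) := fun ω => gradient fk (y (t + 1) ω) - gradient fk (y t ω) with hB
      set G : (Fin m → {z // z ∈ M}) → EuclideanSpace ℝ (Fin d) := fun ω =>
        gradient f x0 - gradient fk x0 + gradient fk (y t ω) - v t ω with hG
      have hGrec : ∀ ω : Fin m → {z // z ∈ M},
          gradient f x0 - gradient fk x0 + gradient fk (y (t + 1) ω) - v (t + 1) ω
            = G ω + (B ω - A ω) := by
        intro ω; simp only [hG, hA, hB]; abel
      -- invariance of G and B
      have hGinv : ∀ (ω : Fin m → {z // z ∈ M}) (z : {z // z ∈ M}), G (Function.update ω ⟨t, ht⟩ z) = G ω := by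
        intro ω z
        simp only [hG, (hinv t ht t le_rfl ω z).1, (hinv t ht t le_rfl ω z).2]
      have hBinv : ∀ (ω : Fin m → {z // z ∈ M}) (z : {z // z ∈ M}), B (Function.update ω ⟨t, ht⟩ z) = B ω := by
        intro ω z
        simp only [hB, hyinv1 t ht ω z, (hinv t ht t le_rfl ω z).1]
      have hkeyG := key t ht G hGinv
      have hkeyB := key t ht B hBinv
      -- cross term vanishes
      have hcross : ∑ ω : Fin m → {z // z ∈ M}, ⟪G ω, B ω - A ω⟫_ℝ = 0 := by
        have : ∑ ω : Fin m → {z // z ∈ M}, ⟪G ω, B ω - A ω⟫_ℝ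
            = ∑ ω : Fin m → {z // z ∈ M}, ⟪G ω, B ω⟫_ℝ - ∑ ω : Fin m → {z // z ∈ M}, ⟪G ω, A ω⟫_ℝ := by
          rw [← Finset.sum_sub_distrib]
          exact Finset.sum_congr rfl fun ω _ => by rw [inner_sub_right]
        rw [this, hkeyG]
        ring
      -- quadratic term
      have hquad : ∑ ω : Fin m → {z // z ∈ M}, ‖B ω - A ω‖ ^ 2
          = ∑ ω : Fin m → {z // z ∈ M}, ‖A ω‖ ^ 2 - ∑ ω : Fin m → {z // z ∈ M}, ‖B ω‖ ^ 2 := by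
        have hBA : ∑ ω : Fin m → {z // z ∈ M}, ⟪B ω, A ω⟫_ℝ = ∑ ω : Fin m → {z // z ∈ M}, ‖B ω‖ ^ 2 := by
          rw [hkeyB]
          exact Finset.sum_congr rfl fun ω _ => real_inner_self_eq_norm_sq _
        have : ∀ ω : Fin m → {z // z ∈ M}, ‖B ω - A ω‖ ^ 2
            = ‖B ω‖ ^ 2 - 2 * ⟪B ω, A ω⟫_ℝ + ‖A ω‖ ^ 2 := fun ω => norm_sub_sq_real _ _
        rw [Finset.sum_congr rfl fun ω _ => this ω]
        rw [Finset.sum_add_distrib, Finset.sum_sub_distrib, ← Finset.mul_sum, hBA]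
        ring
      -- expand
      have hexpand : ∑ ω : Fin m → {z // z ∈ M},
          ‖gradient f x0 - gradient fk x0 + gradient fk (y (t + 1) ω) - v (t + 1) ω‖ ^ 2
            = ∑ ω : Fin m → {z // z ∈ M}, ‖G ω‖ ^ 2 + 2 * ∑ ω : Fin m → {z // z ∈ M}, ⟪G ω, B ω - A ω⟫_ℝ
              + ∑ ω : Fin m → {z // z ∈ M}, ‖B ω - A ω‖ ^ 2 := by
        rw [Finset.mul_sum, ← Finset.sum_add_distrib, ← Finset.sum_add_distrib]
        refine Finset.sum_congr rfl fun ω _ => ?_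
        rw [hGrec ω, norm_add_sq_real]
      rw [hexpand, hcross, hquad, iht]
      rw [Finset.sum_Icc_succ_top (show 1 ≤ t + 1 by omega),
        Finset.sum_Icc_succ_top (show 1 ≤ t + 1 by omega)]
      simp only [Nat.add_sub_cancel]
      ring
  -- normalize
  rw [← Finset.sum_div, ← Finset.sum_div, ← sub_div, main s hsm]
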